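/- The recurrence e(n+1) = e(n) + (α n + e(n)) / (n + α + β − 1) with e(1) = 0 and parameters α > 0, β ≥ 0 satisfies e(n)/(n log n) → α as n → ∞. -/

import Mathlib

open Filter Finset

private lemma dapa_tele (c : ℝ) : ∀ n : ℕ, 1 ≤ n →
    ∑ k ∈ Ico 1 n, (1/((k:ℝ)+c) - 1/((k:ℝ)+c+1)) = 1/(1+c) - 1/((n:ℝ)+c) := by
  intro n hn
  induction n with
  | zero => omega
  | succ m ih =>
    rcases Nat.lt_or_ge m 1 with h|h
    · interval_cases m
      norm_num
    · rw [Finset.sum_Ico_succ_top h, ih h]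
      push_cast
      ring

private lemma dapa_harm (n : ℕ) :
    (harmonic (n - 1) : ℝ) = ∑ k ∈ Ico 1 n, 1/(k:ℝ) := by
  rw [Finset.sum_Ico_eq_sum_range, harmonic]
  push_cast
  exact Finset.sum_congr rfl fun i _ => by rw [one_div]; norm_num; ring_nf

theorem stmt_7 (α β : ℝ) (hα : 0 < α) (hβ : 0 ≤ β)
    (e : ℕ → ℝ) (h1 : e 1 = 0)
    (hrec : ∀ n : ℕ, 1 ≤ n →
      e (n + 1) = e n + (α * n + e n) / (n + α + β - 1)) :
    Tendsto (fun n : ℕ => e n / (n * Real.log n)) atTop (nhds α) := by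
  set c : ℝ := α + β - 1 with hc
  have hc1 : 0 < 1 + c := by simp only [hc]; linarith
  have hpos : ∀ n : ℕ, 1 ≤ n → 0 < (n : ℝ) + c := by
    intro n hn
    have : (1:ℝ) ≤ n := by exact_mod_cast hn
    linarith
  set S : ℕ → ℝ := fun n => ∑ k ∈ Ico 1 n, (k:ℝ)/(((k:ℝ)+c)*((k:ℝ)+c+1)) with hS
  set H : ℕ → ℝ := fun n => ∑ k ∈ Ico 1 n, 1/(k:ℝ) with hH
  -- closed form
  have closed : ∀ n : ℕ, 1 ≤ n → e n = α * ((n:ℝ)+c) * S n := by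
    intro n hn
    induction n with
    | zero => omega
    | succ m ih =>
      rcases Nat.lt_or_ge m 1 with h|h
      · interval_cases m
        simp [hS, h1]
      · have hem := ih h
        have hmc := hpos m h
        have hmc1 : (0:ℝ) < (m:ℝ) + c + 1 := by linarith
        have hden : ((m:ℝ) + α + β - 1) = (m:ℝ) + c := by rw [hc]; ring
        rw [hrec m h, hem, hS]
        simp only
        rw [Finset.sum_Ico_succ_top h]
        rw [hden]
        push_cast
        field_simp
        ring
  -- decomposition of S
  have hdecomp : ∀ n : ℕ, 1 ≤ n →
      S n = (∑ k ∈ Ico 1 n, 1/((k:ℝ)+c+1)) - c * (1/(1+c) - 1/((n:ℝ)+c)) := by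
    intro n hn
    rw [← dapa_tele c n hn, Finset.mul_sum, ← Finset.sum_sub_distrib, hS]
    apply Finset.sum_congr rfl
    intro k hk
    have hk1 : 1 ≤ k := (Finset.mem_Ico.mp hk).1
    have h1 := hpos k hk1
    have h2 : (0:ℝ) < (k:ℝ) + c + 1 := by linarith
    field_simp
    ring
  -- bound on H - T
  have hsub : ∀ n : ℕ, H n - (∑ k ∈ Ico 1 n, 1/((k:ℝ)+c+1))
      = ∑ k ∈ Ico 1 n, (1/(k:ℝ) - 1/((k:ℝ)+c+1)) := by
    intro n
    rw [hH, ← Finset.sum_sub_distrib]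
  have hHT : ∀ n : ℕ, 1 ≤ n →
      0 ≤ H n - (∑ k ∈ Ico 1 n, 1/((k:ℝ)+c+1)) ∧
      H n - (∑ k ∈ Ico 1 n, 1/((k:ℝ)+c+1)) ≤ 2 * (1 + c) := by
    intro n hn
    rw [hsub]
    constructor
    · apply Finset.sum_nonneg
      intro k hk
      have hk1 : 1 ≤ k := (Finset.mem_Ico.mp hk).1
      have hk1' : (1:ℝ) ≤ (k:ℝ) := by exact_mod_cast hk1
      have h2 : (0:ℝ) < (k:ℝ) + c + 1 := by have := hpos k hk1; linarith
      have : 1/((k:ℝ)+c+1) ≤ 1/(k:ℝ) := by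
        apply one_div_le_one_div_of_le (by linarith) (by linarith)
      linarith
    · calc ∑ k ∈ Ico 1 n, (1/(k:ℝ) - 1/((k:ℝ)+c+1))
          ≤ ∑ k ∈ Ico 1 n, (2*(1+c)) * (1/(k:ℝ) - 1/((k:ℝ)+1)) := by
            apply Finset.sum_le_sum
            intro k hk
            have hk1 : 1 ≤ k := (Finset.mem_Ico.mp hk).1
            have hk1' : (1:ℝ) ≤ (k:ℝ) := by exact_mod_cast hk1
            have hkpos : (0:ℝ) < (k:ℝ) := by linarith
            have h2 : (0:ℝ) < (k:ℝ) + c + 1 := by have := hpos k hk1; linarith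
            have h3 : (0:ℝ) < (k:ℝ) + 1 := by linarith
            rw [div_sub_div _ _ (ne_of_gt hkpos) (ne_of_gt h2),
                div_sub_div _ _ (ne_of_gt hkpos) (ne_of_gt h3),
                mul_div_assoc', div_le_div_iff₀ (by positivity) (by positivity)]
            nlinarith [mul_pos hkpos hc1, mul_pos hkpos hkpos]
        _ = 2*(1+c) * (1/(1+(0:ℝ)) - 1/((n:ℝ)+0)) := by
            rw [← Finset.mul_sum]
            congr 1
            rw [← dapa_tele 0 n hn]
            apply Finset.sum_congr rfl
            intro k _
            norm_num
        _ ≤ 2*(1+c) := by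
            have hn' : (1:ℝ) ≤ (n:ℝ) := by exact_mod_cast hn
            have hnp : 0 < (n:ℝ) := by linarith
            norm_num
            nlinarith [mul_pos hc1 (inv_pos.mpr hnp)]
  -- limit lemmas
  have hloginv : Tendsto (fun n : ℕ => (Real.log n)⁻¹) atTop (nhds 0) :=
    (Real.tendsto_log_atTop.comp tendsto_natCast_atTop_atTop).inv_tendsto_atTop
  have hHlog : Tendsto (fun n : ℕ => H n - Real.log n) atTop
      (nhds Real.eulerMascheroniConstant) := by
    have h := Real.tendsto_eulerMascheroniSeq.comp (tendsto_sub_atTop_nat 1)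
    apply h.congr'
    filter_upwards [eventually_ge_atTop 1] with n hn
    simp only [Function.comp_apply, Real.eulerMascheroniSeq]
    have hharm : (harmonic (n-1) : ℝ) = H n := by rw [hH]; exact dapa_harm n
    have hcast : ((n-1:ℕ):ℝ) + 1 = (n:ℝ) := by
      have h2 : (n - 1) + 1 = n := Nat.succ_pred_eq_of_pos hn
      calc ((n-1:ℕ):ℝ) + 1 = (((n-1)+1:ℕ):ℝ) := by push_cast; ring
        _ = (n:ℝ) := by rw [h2]
    rw [hharm, hcast]
  have hHdiv : Tendsto (fun n : ℕ => H n / Real.log n) atTop (nhds 1) := by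
    have h := (hHlog.mul hloginv).add_const 1
    rw [mul_zero, zero_add] at h
    apply h.congr'
    filter_upwards [eventually_ge_atTop 2] with n hn
    have h2 : (2:ℝ) ≤ (n:ℝ) := by exact_mod_cast hn
    have hlogpos : 0 < Real.log n := Real.log_pos (by linarith)
    field_simp
    ring
  -- bounded difference S - H
  set K : ℝ := 2*(1+c) + |c| * (1/(1+c)) with hK
  have hSK : ∀ n : ℕ, 1 ≤ n → |S n - H n| ≤ K := by
    intro n hn
    obtain ⟨hht1, hht2⟩ := hHT n hn
    have hn1 : (1:ℝ) ≤ (n:ℝ) := by exact_mod_cast hn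
    have hx0 : 0 ≤ 1/(1+c) - 1/((n:ℝ)+c) := by
      have : 1/((n:ℝ)+c) ≤ 1/(1+c) :=
        one_div_le_one_div_of_le hc1 (by linarith)
      linarith
    have hx1 : 1/(1+c) - 1/((n:ℝ)+c) ≤ 1/(1+c) := by
      have : 0 < 1/((n:ℝ)+c) := by have := hpos n hn; positivity
      linarith
    rw [hdecomp n hn]
    have habs : |(∑ k ∈ Ico 1 n, 1/((k:ℝ)+c+1)) - c * (1/(1+c) - 1/((n:ℝ)+c)) - H n|
        ≤ |(∑ k ∈ Ico 1 n, 1/((k:ℝ)+c+1)) - H n| + |c * (1/(1+c) - 1/((n:ℝ)+c))| := by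
      have heq : (∑ k ∈ Ico 1 n, 1/((k:ℝ)+c+1)) - c * (1/(1+c) - 1/((n:ℝ)+c)) - H n
          = ((∑ k ∈ Ico 1 n, 1/((k:ℝ)+c+1)) - H n) - c * (1/(1+c) - 1/((n:ℝ)+c)) := by
        ring
      rw [heq]
      exact abs_sub _ _
    refine habs.trans ?_
    rw [hK]
    apply add_le_add
    · rw [abs_le]
      constructor <;> linarith
    · rw [abs_mul, abs_of_nonneg hx0]
      exact mul_le_mul_of_nonneg_left hx1 (abs_nonneg c)
  have hDlim : Tendsto (fun n : ℕ => (S n - H n) / Real.log n) atTop (nhds 0) := by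
    apply squeeze_zero_norm' (a := fun n : ℕ => K * (Real.log n)⁻¹)
    · filter_upwards [eventually_ge_atTop 2] with n hn
      have h2 : (2:ℝ) ≤ (n:ℝ) := by exact_mod_cast hn
      have hlogpos : 0 < Real.log n := Real.log_pos (by linarith)
      have hb := hSK n (by omega)
      rw [Real.norm_eq_abs, abs_div, abs_of_pos hlogpos, mul_comm,
        ← div_eq_inv_mul]
      gcongr
    · have := hloginv.const_mul K
      simpa using this
  have hSdiv : Tendsto (fun n : ℕ => S n / Real.log n) atTop (nhds 1) := by
    have h2 := hHdiv.add hDlim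
    rw [add_zero] at h2
    exact h2.congr fun n => by rw [← add_div]; congr 1; ring
  have hfrac : Tendsto (fun n : ℕ => ((n:ℝ)+c)/(n:ℝ)) atTop (nhds 1) := by
    have hninv : Tendsto (fun n : ℕ => ((n:ℝ))⁻¹) atTop (nhds 0) :=
      tendsto_inv_atTop_zero.comp tendsto_natCast_atTop_atTop
    have h := (hninv.const_mul c).const_add 1
    rw [mul_zero, add_zero] at h
    apply h.congr'
    filter_upwards [eventually_ge_atTop 1] with n hn
    have hn1 : (1:ℝ) ≤ (n:ℝ) := by exact_mod_cast hn
    have hnne : (n:ℝ) ≠ 0 := by linarith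
    field_simp
  have hmain := (hfrac.const_mul α).mul hSdiv
  rw [mul_one, mul_one] at hmain
  apply hmain.congr'
  filter_upwards [eventually_ge_atTop 2] with n hn
  have hn1 : 1 ≤ n := by omega
  have h2 : (2:ℝ) ≤ (n:ℝ) := by exact_mod_cast hn
  have hnne : (n:ℝ) ≠ 0 := by linarith
  have hlogpos : 0 < Real.log n := Real.log_pos (by linarith)
  rw [closed n hn1]
  field_simp
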